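/- Define f₁(q) = 1 + (2q−1)/4 and f₂(q) = 1 + (2q−1)/4 + 4(q(1−q) − 1/6) on [0,1]. Then f₁ and f₂ are both probability densities on [0,1], and for every r ∈ [0,1/4), f₁(q₊(r)) − f₁(q₋(r)) = f₂(q₊(r)) − f₂(q₋(r)) = (1/2)√(1−4r), where q₊(r) = (1+√(1−4r))/2 and q₋(r) = (1−√(1−4r))/2. Consequently the two densities induce identical odd-budget majority voting curves while defining different measures. -/

import Mathlib

open MeasureTheory


/-- Odd-budget majority accuracy: `majP n q = ℙ(Bin(2n+1,q) ≥ n+1)`. -/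
noncomputable def majP (n : ℕ) (q : ℝ) : ℝ :=
  ∑ j ∈ Finset.Icc (n+1) (2*n+1), ((2*n+1).choose j : ℝ) * q^j * (1-q)^(2*n+1-j)

/-- Upper branch of `q(1-q) = r`. -/
noncomputable def qPlus (r : ℝ) : ℝ := (1 + Real.sqrt (1 - 4*r)) / 2

/-- Lower branch of `q(1-q) = r`. -/
noncomputable def qMinus (r : ℝ) : ℝ := (1 - Real.sqrt (1 - 4*r)) / 2

lemma majP_cont (n : ℕ) : Continuous (majP n) := by
  unfold majP
  apply continuous_finset_sum
  intro i _
  fun_prop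

lemma integ_poly (a b c : ℝ) :
    ∫ q in (0:ℝ)..1, (a + b*q + c*q^2) = a + b/2 + c/3 := by
  have h : ∀ x ∈ Set.uIcc (0:ℝ) 1,
      HasDerivAt (fun q : ℝ => a*q + b*q^2/2 + c*q^3/3) (a + b*x + c*x^2) x := by
    intro x _
    have h1 : HasDerivAt (fun q : ℝ => a*q + b*q^2/2 + c*q^3/3)
        (a*1 + b*(2*x^1)/2 + c*(3*x^2)/3) x := by
      exact (((hasDerivAt_id x).const_mul a).add
        (((hasDerivAt_pow 2 x).const_mul b).div_const 2)).add
        (((hasDerivAt_pow 3 x).const_mul c).div_const 3)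
    convert h1 using 1; ring
  rw [intervalIntegral.integral_eq_sub_of_hasDerivAt h
    ((by fun_prop : Continuous fun q:ℝ => a + b*q + c*q^2).intervalIntegrable 0 1)]
  ring

lemma majP_symm (n : ℕ) (q : ℝ) : majP n q + majP n (1-q) = 1 := by
  unfold majP
  have h2 : ∑ j ∈ Finset.Icc (n+1) (2*n+1), ((2*n+1).choose j : ℝ) * (1-q)^j * (1-(1-q))^(2*n+1-j)
      = ∑ j ∈ Finset.Icc 0 n, ((2*n+1).choose j : ℝ) * q^j * (1-q)^(2*n+1-j) := by
    apply Finset.sum_nbij' (i := fun j => 2*n+1-j) (j := fun j => 2*n+1-j)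
    · intro a ha; simp only [Finset.mem_Icc] at *; omega
    · intro a ha; simp only [Finset.mem_Icc] at *; omega
    · intro a ha; simp only [Finset.mem_Icc] at ha; omega
    · intro a ha; simp only [Finset.mem_Icc] at ha; omega
    · intro a ha
      simp only [Finset.mem_Icc] at ha
      rw [Nat.choose_symm (by omega : a ≤ 2*n+1)]
      have e1 : 2*n+1-(2*n+1-a) = a := by omega
      rw [e1]
      have e2 : (1:ℝ) - (1-q) = q := by ring
      rw [e2]
      ring
  rw [h2]
  have h3 : ∑ j ∈ Finset.Icc 0 n, ((2*n+1).choose j : ℝ) * q^j * (1-q)^(2*n+1-j)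
      + ∑ j ∈ Finset.Icc (n+1) (2*n+1), ((2*n+1).choose j : ℝ) * q^j * (1-q)^(2*n+1-j)
      = ∑ j ∈ Finset.range (2*n+2), ((2*n+1).choose j : ℝ) * q^j * (1-q)^(2*n+1-j) := by
    rw [Finset.range_eq_Ico, ← Finset.Ico_add_one_right_eq_Icc, ← Finset.Ico_add_one_right_eq_Icc]
    exact Finset.sum_Ico_consecutive _ (by omega) (by omega)
  rw [add_comm, h3]
  have h4 : (q + (1-q))^(2*n+1) = ∑ j ∈ Finset.range (2*n+2), ((2*n+1).choose j : ℝ) * q^j * (1-q)^(2*n+1-j) := by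
    rw [add_pow]
    apply Finset.sum_congr rfl
    intro k _; ring
  rw [← h4]
  norm_num

lemma icc_eq_ii (g : ℝ → ℝ) :
    ∫ q in Set.Icc (0:ℝ) 1, g q = ∫ q in (0:ℝ)..1, g q := by
  rw [MeasureTheory.integral_Icc_eq_integral_Ioc,
    intervalIntegral.integral_of_le (by norm_num : (0:ℝ) ≤ 1)]

lemma key (n : ℕ) : ∫ q in (0:ℝ)..1, majP n q * (4*(q*(1-q) - 1/6)) = 0 := by
  set I := ∫ q in (0:ℝ)..1, majP n q * (4*(q*(1-q) - 1/6)) with hI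
  have hrefl : I = ∫ q in (0:ℝ)..1, majP n (1-q) * (4*((1-q)*(1-(1-q)) - 1/6)) := by
    rw [hI]
    exact ((intervalIntegral.integral_comp_sub_left
      (a := (0:ℝ)) (b := 1) (fun q => majP n q * (4*(q*(1-q) - 1/6))) 1).trans
      (by norm_num)).symm
  have hsub : (∫ q in (0:ℝ)..1, majP n (1-q) * (4*((1-q)*(1-(1-q)) - 1/6)))
      = (∫ q in (0:ℝ)..1, (-2/3 + 4*q + (-4)*q^2)) - I := by
    rw [hI, ← intervalIntegral.integral_sub
      ((by fun_prop : Continuous fun q:ℝ => -2/3 + 4*q + (-4)*q^2).intervalIntegrable 0 1)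
      ((show Continuous fun q:ℝ => majP n q * (4*(q*(1-q) - 1/6)) from (majP_cont n).mul (by fun_prop : Continuous fun q:ℝ => 4*(q*(1-q) - 1/6))).intervalIntegrable 0 1)]
    apply intervalIntegral.integral_congr
    intro x _
    have h := majP_symm n x
    simp only
    linear_combination (4*(x*(1-x) - 1/6)) * h
  rw [hsub, integ_poly] at hrefl
  linarith

/-- Two different densities on `[0,1]` with identical branch asymmetry
`(1/2)√(1−4r)`, hence identical odd-budget majority voting curves. -/
theorem stmt14 :
    let f₁ : ℝ → ℝ := fun q => 1 + (2*q - 1)/4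
    let f₂ : ℝ → ℝ := fun q => 1 + (2*q - 1)/4 + 4*(q*(1-q) - 1/6)
    ((∀ q ∈ Set.Icc (0:ℝ) 1, 0 ≤ f₁ q) ∧ ∫ q in Set.Icc (0:ℝ) 1, f₁ q = 1) ∧
    ((∀ q ∈ Set.Icc (0:ℝ) 1, 0 ≤ f₂ q) ∧ ∫ q in Set.Icc (0:ℝ) 1, f₂ q = 1) ∧
    (∀ r ∈ Set.Ico (0:ℝ) (1/4),
      f₁ (qPlus r) - f₁ (qMinus r) = (1/2) * Real.sqrt (1 - 4*r) ∧
      f₂ (qPlus r) - f₂ (qMinus r) = (1/2) * Real.sqrt (1 - 4*r)) ∧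
    (∀ n : ℕ, ∫ q in Set.Icc (0:ℝ) 1, majP n q * f₁ q = ∫ q in Set.Icc (0:ℝ) 1, majP n q * f₂ q) ∧
    ¬ (∀ q ∈ Set.Icc (0:ℝ) 1, f₁ q = f₂ q) := by
  intro f₁ f₂
  refine ⟨⟨?_, ?_⟩, ⟨?_, ?_⟩, ?_, ?_, ?_⟩
  · rintro q ⟨h0, h1⟩
    show 0 ≤ 1 + (2*q - 1)/4
    nlinarith
  · rw [icc_eq_ii]
    have h : ∫ q in (0:ℝ)..1, f₁ q = ∫ q in (0:ℝ)..1, (3/4 + (1/2)*q + 0*q^2) :=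
      intervalIntegral.integral_congr (fun x _ => by show 1 + (2*x-1)/4 = _; ring)
    rw [h, integ_poly]; norm_num
  · rintro q ⟨h0, h1⟩
    show 0 ≤ 1 + (2*q - 1)/4 + 4*(q*(1-q) - 1/6)
    nlinarith
  · rw [icc_eq_ii]
    have h : ∫ q in (0:ℝ)..1, f₂ q = ∫ q in (0:ℝ)..1, (1/12 + (9/2)*q + (-4)*q^2) :=
      intervalIntegral.integral_congr (fun x _ => by
        show 1 + (2*x-1)/4 + 4*(x*(1-x) - 1/6) = _; ring)
    rw [h, integ_poly]; norm_num
  · rintro r ⟨hr0, hr1⟩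
    constructor
    · show (1 + (2*(qPlus r) - 1)/4) - (1 + (2*(qMinus r) - 1)/4) = _
      unfold qPlus qMinus; ring
    · show (1 + (2*(qPlus r) - 1)/4 + 4*((qPlus r)*(1-(qPlus r)) - 1/6))
        - (1 + (2*(qMinus r) - 1)/4 + 4*((qMinus r)*(1-(qMinus r)) - 1/6)) = _
      unfold qPlus qMinus; ring
  · intro n
    rw [icc_eq_ii, icc_eq_ii]
    have h : ∫ q in (0:ℝ)..1, majP n q * f₂ q
        = ∫ q in (0:ℝ)..1, (majP n q * f₁ q + majP n q * (4*(q*(1-q) - 1/6))) :=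
      intervalIntegral.integral_congr (fun x _ => by
        show majP n x * (1 + (2*x-1)/4 + 4*(x*(1-x) - 1/6))
          = majP n x * (1 + (2*x-1)/4) + majP n x * (4*(x*(1-x) - 1/6)); ring)
    rw [h, intervalIntegral.integral_add
      ((show Continuous fun q:ℝ => majP n q * (1 + (2*q-1)/4) from (majP_cont n).mul (by fun_prop : Continuous fun q:ℝ => 1 + (2*q-1)/4)).intervalIntegrable 0 1)
      ((show Continuous fun q:ℝ => majP n q * (4*(q*(1-q) - 1/6)) from (majP_cont n).mul (by fun_prop : Continuous fun q:ℝ => 4*(q*(1-q) - 1/6))).intervalIntegrable 0 1),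
      key, add_zero]
  · intro h
    have h0 := h 0 ⟨le_refl 0, by norm_num⟩
    have : (1:ℝ) + (2*0 - 1)/4 = 1 + (2*0 - 1)/4 + 4*(0*(1-0) - 1/6) := h0
    norm_num at this
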